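/- Let O ⊆ P contain A. For every order ideal J ∈ 𝒥ₖ, the transform ξ maps the indicator vector of M_O(J) to the indicator vector of {(1, w^{O,J}(1)), …, (k, w^{O,J}(k))}: ξ(1_{M_O(J)}) = 1_{{(i, w^{O,J}(i)) : 1 ≤ i ≤ k}}. -/

import Mathlib

open scoped Classical Pointwise

noncomputable section

/-- Position of `j` in the total order `1 ⋖ … ⋖ n ⋖ -n ⋖ … ⋖ -1` on `N`. -/
def ordKey (n : ℕ) (j : ℤ) : ℤ := if 0 < j then j else 2 * n + 1 + j

/-- Membership in the type C Gelfand–Tsetlin poset `P`: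
pairs `(i,j)` with `1 ≤ i ≤ n` and `i ≤ |j| ≤ n`. -/
def inP (n : ℕ) (p : ℤ × ℤ) : Prop :=
  1 ≤ p.1 ∧ p.1 ≤ (n : ℤ) ∧ p.1 ≤ |p.2| ∧ |p.2| ≤ (n : ℤ)

/-- The order relation `⪯` of `P`: `(i₁,j₁) ⪯ (i₂,j₂)` iff `i₁ ≤ i₂` and `j₁ ⩽̇ j₂`. -/
def ple (n : ℕ) (p q : ℤ × ℤ) : Prop :=
  p.1 ≤ q.1 ∧ ordKey n p.2 ≤ ordKey n q.2

/-- Strict version of `⪯`. -/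
def plt (n : ℕ) (p q : ℤ × ℤ) : Prop := ple n p q ∧ p ≠ q

/-- The elements of `N = {1,…,n,-n,…,-1}` listed in increasing `⋖` order. -/
def jList (n : ℕ) : List ℤ :=
  ((List.range n).map fun t => (t : ℤ) + 1) ++ ((List.range n).map fun t => (t : ℤ) - n)

/-- All pairs `(i,j)` with `i ∈ [1,n]`, `j ∈ N`, ordered first by `i` increasing,
then by `j` increasing with respect to `⋖`. -/
def posList (n : ℕ) : List (ℤ × ℤ) :=
  (List.range n).flatMap fun a => (jList n).map fun j => ((a : ℤ) + 1, j)

/-- `P` as a finite set. -/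
def Pfin (n : ℕ) : Finset (ℤ × ℤ) := (posList n).toFinset.filter (inP n)

/-- `N` as a finite set. -/
def Nfin (n : ℕ) : Finset ℤ := (jList n).toFinset

/-- The diagonal `A = {(i,i) : 1 ≤ i ≤ n}`. -/
def Aset (n : ℕ) : Finset (ℤ × ℤ) :=
  (Finset.range n).image fun t => (((t : ℤ) + 1, (t : ℤ) + 1) : ℤ × ℤ)

/-- Order ideals (downward closed subsets) of `P`. -/
def IsIdeal (n : ℕ) (J : Finset (ℤ × ℤ)) : Prop :=
  (∀ p ∈ J, inP n p) ∧ ∀ p ∈ J, ∀ q ∈ Pfin n, ple n q p → q ∈ J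

/-- The set of `≺`-maximal elements of `J`. -/
def maxPrec (n : ℕ) (J : Finset (ℤ × ℤ)) : Finset (ℤ × ℤ) :=
  J.filter fun p => ∀ q ∈ J, ple n p q → q = p

/-- `M_O(J) = (J ∩ O) ∪ max_≺(J)`. -/
def MO (n : ℕ) (O J : Finset (ℤ × ℤ)) : Finset (ℤ × ℤ) := (J ∩ O) ∪ maxPrec n J

/-- The permutation `w_M`: the product of the transpositions `s_{i,j}` over `(i,j) ∈ M`,
ordered first by `i` increasing and then by `j` increasing with respect to `⋖`
(the leftmost factor acts last). -/
def wPerm (n : ℕ) (M : Finset (ℤ × ℤ)) : Equiv.Perm ℤ :=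
  (((posList n).filter fun p => decide (p ∈ M)).map fun p => Equiv.swap p.1 p.2).prod

/-- `w^{O,J} = w_O⁻¹ ⬝ w_{M_O(J)}`. -/
def wOJ (n : ℕ) (O J : Finset (ℤ × ℤ)) : Equiv.Perm ℤ :=
  (wPerm n O)⁻¹ * wPerm n (MO n O J)

/-- The principal order ideal `⟨i,j⟩` of `(i,j) ∈ P`. -/
def princ (n : ℕ) (p : ℤ × ℤ) : Finset (ℤ × ℤ) := (Pfin n).filter fun q => ple n q p

/-- `r(i,j) = w^{O,⟨i,j⟩}(i)`. -/
def rMap (n : ℕ) (O : Finset (ℤ × ℤ)) (i j : ℤ) : ℤ := wOJ n O (princ n (i, j)) i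

/-- Inverse of `ordKey` (on the relevant range `[1, 2n]`). -/
def invOrdKey (n : ℕ) (t : ℤ) : ℤ := if t ≤ (n : ℤ) then t else t - (2 * n + 1)

/-- The `⋖`-maximal `j'` with `j' ⋖ j` and `(i,j') ∈ O`. -/
def prevO (n : ℕ) (O : Finset (ℤ × ℤ)) (i j : ℤ) : ℤ :=
  invOrdKey n (WithBot.unbotD 0 ((((Nfin n).filter fun j' => (i, j') ∈ O ∧ ordKey n j' < ordKey n j).image
    (ordKey n)).max))

/-- The pipe-dream linear transform `ξ` of `ℝ^P` (coordinates outside `P` are untouched):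
`ξ(ε_{i,i}) = ε_{i,r(i,i)}` and `ξ(ε_{i,j}) = ε_{i,r(i,j)} - ε_{i,r(i,j')}` for `j ≠ i`,
where `j'` is `⋖`-maximal with `j' ⋖ j` and `(i,j') ∈ O`. -/
def xiMap (n : ℕ) (O : Finset (ℤ × ℤ)) (x : (ℤ × ℤ) → ℝ) : (ℤ × ℤ) → ℝ := fun q =>
  if inP n q then
    (∑ j ∈ (Nfin n).filter (fun j => inP n (q.1, j) ∧ rMap n O q.1 j = q.2), x (q.1, j))
    - (∑ j ∈ (Nfin n).filter
        (fun j => inP n (q.1, j) ∧ j ≠ q.1 ∧ rMap n O q.1 (prevO n O q.1 j) = q.2), x (q.1, j))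
  else x q

/-- Indicator vector `1_{M_O(J)} ∈ ℝ^P`. -/
def indicMO (n : ℕ) (O J : Finset (ℤ × ℤ)) : (ℤ × ℤ) → ℝ := fun p =>
  if p ∈ MO n O J then 1 else 0

/-- The fundamental marked chain-order polytope `𝒬_O(ω_k)`:
the convex hull of the vectors `1_{M_O(J)}`, `J ∈ 𝒥ₖ`. -/
def QOfund (n : ℕ) (O : Finset (ℤ × ℤ)) (k : ℕ) : Set ((ℤ × ℤ) → ℝ) :=
  convexHull ℝ {x | ∃ J : Finset (ℤ × ℤ),
    IsIdeal n J ∧ (J ∩ Aset n).card = k ∧ x = indicMO n O J}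

/-- The marked chain-order polytope `𝒬_O(λ)` for `λ = a₁ω₁ + … + a_nω_n`:
the Minkowski sum `a₁𝒬_O(ω₁) + … + a_n𝒬_O(ω_n)`. -/
def QO (n : ℕ) (O : Finset (ℤ × ℤ)) (a : ℕ → ℕ) : Set ((ℤ × ℤ) → ℝ) :=
  ∑ k ∈ Finset.Icc 1 n, a k • QOfund n O k

/-- Integrality (lattice point) predicate. -/
def IsLat (x : (ℤ × ℤ) → ℝ) : Prop := ∀ p, ∃ m : ℤ, x p = m

/-- Type B: `λ(i) = a_i + … + a_{n-1} + a_n/2`. -/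
def lamB (n : ℕ) (a : ℕ → ℕ) (i : ℤ) : ℝ :=
  (∑ t ∈ Finset.Icc i.toNat (n - 1), (a t : ℝ)) + (a n : ℝ) / 2

/-- The type B poset polytope `𝒬^B_O(λ)` (H-description with factor `1/2`
on the coordinates in `B = {(i,-i)}`). -/
def QB (n : ℕ) (O : Finset (ℤ × ℤ)) (lam : ℤ → ℝ) : Set ((ℤ × ℤ) → ℝ) :=
  {x | (∀ i : ℤ, 1 ≤ i → i ≤ (n : ℤ) → x (i, i) = lam i) ∧
    (∀ p, inP n p → 0 ≤ x p) ∧ (∀ p, ¬ inP n p → x p = 0) ∧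
    ∀ (pq rs : ℤ × ℤ) (c : List (ℤ × ℤ)), pq ∈ O → inP n rs →
      (∀ q ∈ c, inP n q ∧ q ∉ O) →
      List.Chain' (plt n) (pq :: (c ++ [rs])) →
      (c.map x).sum ≤ x pq - (if rs.2 = -rs.1 then (1 : ℝ) / 2 else 1) * x rs}

/-- The point `x^{J,D}`. -/
def xJD (n : ℕ) (O J : Finset (ℤ × ℤ)) (D : Finset ℤ) : (ℤ × ℤ) → ℝ := fun p =>
  if p ∈ MO n O J then (if p.2 = -p.1 ∧ p.1 ∉ D then 2 else 1) else 0

/-- The projection `π : ℝ^P → ℝ^{P∖A}` (realized by zeroing the `A`-coordinates). -/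
def piA (x : (ℤ × ℤ) → ℝ) : (ℤ × ℤ) → ℝ := fun p => if p.2 = p.1 then 0 else x p

/-- The transformed type B poset polytope `Π^B_O(λ) = πξ(𝒬^B_O(λ))`. -/
def PiB (n : ℕ) (O : Finset (ℤ × ℤ)) (a : ℕ → ℕ) : Set ((ℤ × ℤ) → ℝ) :=
  (fun x => piA (xiMap n O x)) '' QB n O (lamB n a)

/-- The point `y^D ∈ ℝ^{P∖A}`. -/
def yD (D : Finset ℤ) : (ℤ × ℤ) → ℝ := fun p => if p.2 = -p.1 ∧ p.1 ∈ D then 1 else 0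

namespace Aux10

open Equiv List

lemma getLastD_eq_getLast {l : List ℤ} (h : l ≠ []) (d : ℤ) :
    l.getLastD d = l.getLast h := by
  rw [List.getLastD_eq_getLast?, List.getLast?_eq_getLast h]; rfl

def swapsProd (i : ℤ) (l : List ℤ) : Equiv.Perm ℤ := (l.map (Equiv.swap i)).prod

@[simp] lemma swapsProd_nil (i : ℤ) : swapsProd i [] = 1 := rfl

lemma swapsProd_cons (i a : ℤ) (l : List ℤ) :
    swapsProd i (a :: l) = Equiv.swap i a * swapsProd i l := by
  simp [swapsProd]

lemma swapsProd_apply_of_not_mem {i v : ℤ} {l : List ℤ} (hv : v ≠ i) (hl : v ∉ l) :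
    swapsProd i l v = v := by
  induction l with
  | nil => rfl
  | cons a l ih =>
    simp only [mem_cons, not_or] at hl
    rw [swapsProd_cons, Equiv.Perm.mul_apply, ih hl.2,
      Equiv.swap_apply_of_ne_of_ne hv hl.1]

lemma swapsProd_apply_self {i : ℤ} {l : List ℤ} (hi : i ∉ l) (hn : l.Nodup) :
    swapsProd i l i = l.getLastD i := by
  induction l with
  | nil => rfl
  | cons a l ih =>
    simp only [mem_cons, not_or] at hi
    rw [swapsProd_cons, Equiv.Perm.mul_apply, ih hi.2 hn.of_cons]
    rcases eq_or_ne l [] with rfl | hne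
    · simp
    · have hmem := List.getLast_mem hne
      rw [getLastD_eq_getLast hne, Equiv.swap_apply_of_ne_of_ne
        (fun h => hi.2 (by rw [← h]; exact hmem))
        (fun h => (List.nodup_cons.1 hn).1 (by rw [← h]; exact hmem))]
      rw [List.getLastD_cons, getLastD_eq_getLast hne]

lemma swapsProd_apply_mem {i v : ℤ} {l : List ℤ} (hi : i ∉ l) (hn : l.Nodup)
    (hv : v ∈ l) : swapsProd i l v = (l.takeWhile (· ≠ v)).getLastD i := by
  induction l with
  | nil => cases hv
  | cons a l ih =>
    simp only [mem_cons, not_or] at hi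
    have hna : a ∉ l := (List.nodup_cons.1 hn).1
    rw [swapsProd_cons, Equiv.Perm.mul_apply]
    rcases eq_or_ne a v with rfl | hav
    · rw [swapsProd_apply_of_not_mem (fun h => hi.1 h.symm) hna, Equiv.swap_apply_right]
      have : (a :: l).takeWhile (· ≠ a) = [] := by
        simp [List.takeWhile]
      rw [this]; rfl
    · have hvl : v ∈ l := by
        rcases List.mem_cons.1 hv with h | h; exact absurd h.symm hav; exact h
      rw [ih hi.2 hn.of_cons hvl]
      have htw : (a :: l).takeWhile (· ≠ v) = a :: l.takeWhile (· ≠ v) := by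
        rw [List.takeWhile_cons]
        simp [hav]
      rw [htw, List.getLastD_cons]
      rcases eq_or_ne (l.takeWhile (· ≠ v)) [] with he | hne
      · rw [he]; simp [Equiv.swap_apply_left]
      · have hmem : (l.takeWhile (· ≠ v)).getLast hne ∈ l :=
          (List.takeWhile_prefix _).sublist.subset (List.getLast_mem hne)
        rw [getLastD_eq_getLast hne, getLastD_eq_getLast hne,
          Equiv.swap_apply_of_ne_of_ne
          (fun h => hi.2 (by rw [← h]; exact hmem))
          (fun h => hna (by rw [← h]; exact hmem))]

lemma swapsProd_apply_mem_insert (i v : ℤ) (l : List ℤ) :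
    swapsProd i l v ∈ v :: i :: l := by
  induction l with
  | nil => simp [swapsProd]
  | cons a l ih =>
    rw [swapsProd_cons, Equiv.Perm.mul_apply]
    have h0 : ∀ u : ℤ, Equiv.swap i a u = u ∨ Equiv.swap i a u = i ∨ Equiv.swap i a u = a := by
      intro u
      rcases eq_or_ne u i with rfl | h1
      · simp
      rcases eq_or_ne u a with rfl | h2
      · simp
      · rw [Equiv.swap_apply_of_ne_of_ne h1 h2]; left; rfl
    simp only [mem_cons] at ih ⊢
    rcases h0 (swapsProd i l v) with h | h | h <;> rw [h] <;> tauto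

lemma swapsProd_inv_apply_mem_insert (i v : ℤ) (l : List ℤ) :
    (swapsProd i l)⁻¹ v ∈ v :: i :: l := by
  induction l generalizing v with
  | nil => simp [swapsProd]
  | cons a l ih =>
    rw [swapsProd_cons, mul_inv_rev, Equiv.Perm.mul_apply, Equiv.swap_inv]
    have h0 : Equiv.swap i a v = v ∨ Equiv.swap i a v = i ∨ Equiv.swap i a v = a := by
      rcases eq_or_ne v i with rfl | h1
      · simp
      rcases eq_or_ne v a with rfl | h2
      · simp
      · rw [Equiv.swap_apply_of_ne_of_ne h1 h2]; left; rfl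
    have H := ih (Equiv.swap i a v)
    simp only [mem_cons] at H ⊢
    rcases h0 with h | h | h <;> rw [h] at H ⊢ <;> tauto

end Aux10
namespace Aux10

lemma abs_split {j : ℤ} {n : ℕ} :
    (1 ≤ |j| ∧ |j| ≤ (n:ℤ)) ↔ ((1 ≤ j ∧ j ≤ (n:ℤ)) ∨ (-(n:ℤ) ≤ j ∧ j ≤ -1)) := by
  rcases abs_cases j with ⟨he, h0⟩ | ⟨he, h0⟩ <;> rw [he] <;> omega

lemma jList_eq (n : ℕ) : jList n
    = ((List.range n).map fun t : ℕ => ((t:ℤ) + 1))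
      ++ ((List.range n).map fun t : ℕ => ((t:ℤ) - n)) := by
  rw [jList]
  simp only [bind_pure_comp, List.map_eq_map, List.map_map]
  rfl

lemma mem_jList {n : ℕ} {j : ℤ} :
    j ∈ jList n ↔ ((1 ≤ j ∧ j ≤ (n:ℤ)) ∨ (-(n:ℤ) ≤ j ∧ j ≤ -1)) := by
  rw [jList_eq, List.mem_append]
  constructor
  · rintro (h | h) <;>
      obtain ⟨t, ht, rfl⟩ := List.mem_map.1 h <;> rw [List.mem_range] at ht
    · left; constructor <;> omega
    · right; constructor <;> omega
  · rintro (⟨h1, h2⟩ | ⟨h1, h2⟩)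
    · exact Or.inl (List.mem_map.2 ⟨(j - 1).toNat, List.mem_range.2 (by omega),
        by show ((j-1).toNat:ℤ) + 1 = j; omega⟩)
    · exact Or.inr (List.mem_map.2 ⟨(j + n).toNat, List.mem_range.2 (by omega),
        by show ((j+n).toNat:ℤ) - n = j; omega⟩)

lemma mem_jList_abs {n : ℕ} {j : ℤ} : j ∈ jList n ↔ (1 ≤ |j| ∧ |j| ≤ (n:ℤ)) := by
  rw [mem_jList, abs_split]

lemma key_eval_pos {n : ℕ} {j : ℤ} (h : 0 < j) : ordKey n j = j := if_pos h

lemma key_eval_neg {n : ℕ} {j : ℤ} (h : j ≤ 0) : ordKey n j = 2 * n + 1 + j :=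
  if_neg (by omega)

lemma key_bounds {n : ℕ} {j : ℤ} (h1 : 1 ≤ j ∨ j ≤ -1) (h2 : |j| ≤ (n:ℤ)) :
    |j| ≤ ordKey n j ∧ 1 ≤ ordKey n j ∧ ordKey n j ≤ 2 * n ∧
      (1 ≤ j → ordKey n j = j) ∧ (j ≤ -1 → (n:ℤ) < ordKey n j) := by
  rcases abs_cases j with ⟨he, h0⟩ | ⟨he, h0⟩ <;> rw [he] at h2 ⊢ <;>
    simp only [ordKey] <;> split <;> omega

lemma key_inj {n : ℤ} {a b : ℤ} {m : ℕ} (ha : 1 ≤ |a|) (ha2 : |a| ≤ (m:ℤ))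
    (hb : 1 ≤ |b|) (hb2 : |b| ≤ (m:ℤ)) (h : ordKey m a = ordKey m b) : a = b := by
  rcases abs_cases a with ⟨hea, h0a⟩ | ⟨hea, h0a⟩ <;>
    rcases abs_cases b with ⟨heb, h0b⟩ | ⟨heb, h0b⟩ <;>
    rw [hea] at ha ha2 <;> rw [heb] at hb hb2 <;>
    simp only [ordKey] at h <;>
    · split at h <;> split at h <;> omega

lemma key_gt_row {n : ℕ} {t j : ℤ} (ht : 1 ≤ t) (h1 : t ≤ |j|) (h2 : |j| ≤ (n:ℤ))
    (hne : j ≠ t) : t < ordKey n j := by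
  rcases abs_cases j with ⟨he, h0⟩ | ⟨he, h0⟩ <;> rw [he] at h1 h2 <;>
    simp only [ordKey] <;> split <;> omega

lemma key_ge_row {n : ℕ} {t j : ℤ} (ht : 1 ≤ t) (h1 : t ≤ |j|) (h2 : |j| ≤ (n:ℤ)) :
    t ≤ ordKey n j := by
  rcases eq_or_ne j t with rfl | hne
  · rw [key_eval_pos (by omega)]
  · exact le_of_lt (key_gt_row ht h1 h2 hne)

lemma invOrdKey_ordKey {n : ℕ} {j : ℤ} (h1 : 1 ≤ |j|) (h2 : |j| ≤ (n:ℤ)) :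
    invOrdKey n (ordKey n j) = j := by
  rcases abs_cases j with ⟨he, h0⟩ | ⟨he, h0⟩ <;> rw [he] at h1 h2 <;>
    simp only [ordKey, invOrdKey] <;> split <;> first | omega | (split <;> omega)

lemma jList_pairwise {n : ℕ} :
    (jList n).Pairwise (fun a b => ordKey n a < ordKey n b) := by
  have hr : ∀ m : ℕ, (List.range m).Pairwise (· < ·) := fun m => List.pairwise_lt_range (n := m)
  rw [jList_eq, List.pairwise_append]
  refine ⟨List.pairwise_map.2 ((hr n).imp ?_),
    List.pairwise_map.2 ((hr n).imp_of_mem ?_), ?_⟩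
  · intro a b h
    rw [key_eval_pos (by omega), key_eval_pos (by omega)]; omega
  · intro a b ha hb h
    rw [List.mem_range] at ha hb
    rw [key_eval_neg (by omega), key_eval_neg (by omega)]; omega
  · intro a ha b hb
    simp only [List.mem_map, List.mem_range] at ha hb
    obtain ⟨t, ht, rfl⟩ := ha
    obtain ⟨s, hs, rfl⟩ := hb
    rw [key_eval_pos (by omega), key_eval_neg (by omega)]; omega

lemma jList_nodup {n : ℕ} : (jList n).Nodup :=
  jList_pairwise.imp fun h => by rintro rfl; omega

lemma pairwise_getLastD {R : ℤ → ℤ → Prop} {l : List ℤ} (hp : l.Pairwise R) {x : ℤ}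
    (hx : x ∈ l) (d : ℤ) : x = l.getLastD d ∨ R x (l.getLastD d) := by
  induction l generalizing d with
  | nil => cases hx
  | cons a l ih =>
    rw [List.getLastD_cons]
    rcases eq_or_ne l [] with rfl | hne
    · rcases List.mem_cons.1 hx with rfl | h
      · left; rfl
      · cases h
    · have hg : l.getLastD a ∈ l := by
        rw [getLastD_eq_getLast hne]; exact List.getLast_mem hne
      rcases List.mem_cons.1 hx with rfl | h
      · right; exact (List.pairwise_cons.1 hp).1 _ hg
      · exact ih hp.of_cons h a

lemma takeWhile_eq_filter_of_sorted {n : ℕ} {l : List ℤ}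
    (hp : l.Pairwise (fun a b => ordKey n a < ordKey n b)) {v : ℤ} (hv : v ∈ l) :
    l.takeWhile (fun j => decide (j ≠ v))
      = l.filter (fun j => decide (ordKey n j < ordKey n v)) := by
  induction l with
  | nil => rfl
  | cons a l ih =>
    rcases List.pairwise_cons.1 hp with ⟨ha, hp'⟩
    rcases eq_or_ne a v with rfl | hav
    · rw [List.takeWhile_cons_of_neg (by simp), List.filter_cons_of_neg (by simp)]
      symm
      rw [List.filter_eq_nil_iff]
      intro x hx
      simp only [decide_eq_true_eq, not_lt]
      exact le_of_lt (ha x hx)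
    · have hvl : v ∈ l := by
        rcases List.mem_cons.1 hv with h | h
        · exact absurd h.symm hav
        · exact h
      rw [List.takeWhile_cons_of_pos (by simp [hav]),
        List.filter_cons_of_pos (by simp [ha v hvl]), ih hp' hvl]

end Aux10
namespace Aux10

open Equiv

def restCols (n : ℕ) (S : Finset (ℤ × ℤ)) (t : ℤ) : List ℤ :=
  (jList n).filter (fun j => decide ((t, j) ∈ S) && decide (j ≠ t))

def rowsList (n : ℕ) : List ℤ := (List.range n).map fun a : ℕ => ((a:ℤ) + 1)

def rowPerm (n : ℕ) (S : Finset (ℤ × ℤ)) (t : ℤ) : Equiv.Perm ℤ :=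
  swapsProd t (restCols n S t)

def Wpart (n : ℕ) (S : Finset (ℤ × ℤ)) (l : List ℤ) : Equiv.Perm ℤ :=
  (l.map (rowPerm n S)).prod

lemma mem_restCols {n : ℕ} {S : Finset (ℤ × ℤ)} {t j : ℤ} :
    j ∈ restCols n S t ↔ j ∈ jList n ∧ (t, j) ∈ S ∧ j ≠ t := by
  simp [restCols, List.mem_filter]

lemma restCols_pairwise {n : ℕ} {S : Finset (ℤ × ℤ)} {t : ℤ} :
    (restCols n S t).Pairwise (fun a b => ordKey n a < ordKey n b) :=
  jList_pairwise.sublist List.filter_sublist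

lemma restCols_nodup {n : ℕ} {S : Finset (ℤ × ℤ)} {t : ℤ} :
    (restCols n S t).Nodup := jList_nodup.sublist List.filter_sublist

lemma not_self_mem_restCols {n : ℕ} {S : Finset (ℤ × ℤ)} {t : ℤ} :
    t ∉ restCols n S t := fun h => (mem_restCols.1 h).2.2 rfl

lemma prod_apply (l : List (Equiv.Perm ℤ)) (v : ℤ) :
    l.prod v = l.foldr (fun g x => g x) v := by
  induction l with
  | nil => rfl
  | cons g l ih => rw [List.prod_cons, Equiv.Perm.mul_apply, ih]; rfl

lemma strip (t : ℤ) (l : List ℤ) (p : ℤ → Bool) :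
    ((l.filter p).map (Equiv.swap t)).prod
      = ((l.filter (fun j => p j && decide (j ≠ t))).map (Equiv.swap t)).prod := by
  induction l with
  | nil => rfl
  | cons a l ih =>
    by_cases hp : p a = true
    · rcases eq_or_ne a t with rfl | hat
      · rw [List.filter_cons_of_pos hp,
          List.filter_cons_of_neg (by simp [hp])]
        rw [List.map_cons, List.prod_cons, Equiv.swap_self, ih]
        simp
        rfl
      · rw [List.filter_cons_of_pos hp,
          List.filter_cons_of_pos (by simp [hp, hat]),
          List.map_cons, List.map_cons, List.prod_cons, List.prod_cons, ih]
    · rw [List.filter_cons_of_neg (by simp [hp]),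
        List.filter_cons_of_neg (by simp [hp]), ih]

lemma filter_flatMap_prod {α β : Type} [Monoid β] (l : List ℕ) (F : ℕ → List α)
    (p : α → Bool) (f : α → β) :
    (((l.flatMap F).filter p).map f).prod
      = (l.map (fun a => (((F a).filter p).map f).prod)).prod := by
  induction l with
  | nil => rfl
  | cons a l ih =>
    rw [List.flatMap_cons, List.filter_append, List.map_append, List.prod_append,
      List.map_cons, List.prod_cons, ih]

lemma wPerm_eq (n : ℕ) (S : Finset (ℤ × ℤ)) :
    wPerm n S = ((rowsList n).map (rowPerm n S)).prod := by
  rw [wPerm, posList]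
  simp only [bind_pure_comp, List.map_eq_map, List.flatMap_map]
  rw [filter_flatMap_prod]
  rw [rowsList, List.map_map]
  congr 1
  apply List.map_congr_left
  intro a _
  simp only [Function.comp]
  rw [List.filter_map, List.map_map]
  have h1 : ((jList n).filter ((fun p : ℤ × ℤ => decide (p ∈ S)) ∘ fun j => ((a:ℤ)+1, j)))
      = (jList n).filter (fun j => decide (((a:ℤ)+1, j) ∈ S)) := by
    apply List.filter_congr
    intro j _
    rfl
  rw [h1]
  have h2 : ((fun p : ℤ × ℤ => Equiv.swap p.1 p.2) ∘ fun j => ((a:ℤ)+1, j))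
      = Equiv.swap ((a:ℤ)+1) := rfl
  rw [h2]
  rw [strip ((a:ℤ)+1) (jList n) (fun j => decide (((a:ℤ)+1, j) ∈ S))]
  rfl

lemma rowsList_split {n : ℕ} {i : ℤ} (h1 : 1 ≤ i) (h2 : i ≤ (n:ℤ)) :
    ∃ la lb : List ℤ, rowsList n = la ++ i :: lb ∧
      (∀ t ∈ la, 1 ≤ t ∧ t < i) ∧ (∀ t ∈ lb, i < t ∧ t ≤ (n:ℤ)) := by
  refine ⟨(List.range (i-1).toNat).map (fun a : ℕ => ((a:ℤ) + 1)),
    (List.range (n - i.toNat)).map (fun a : ℕ => ((a:ℤ) + i + 1)), ?_, ?_, ?_⟩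
  · have hc : n = ((i-1).toNat + 1) + (n - i.toNat) := by omega
    conv_lhs => rw [rowsList, hc]
    rw [List.range_add, List.range_succ, List.map_append, List.map_append,
      List.append_assoc]
    congr 1
    rw [List.map_cons, List.map_nil, List.singleton_append]
    have hfc : ((((i-1).toNat : ℕ) : ℤ) + 1) = i := by omega
    rw [hfc]
    congr 1
    rw [List.map_map]
    apply List.map_congr_left
    intro a _
    simp only [Function.comp]
    push_cast
    omega
  · intro t ht
    obtain ⟨a, ha, rfl⟩ := List.mem_map.1 ht
    rw [List.mem_range] at ha
    omega
  · intro t ht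
    obtain ⟨a, ha, rfl⟩ := List.mem_map.1 ht
    rw [List.mem_range] at ha
    omega

end Aux10
namespace Aux10

lemma mem_Pfin {n : ℕ} {p : ℤ × ℤ} : p ∈ Pfin n ↔ inP n p := by
  rw [Pfin, Finset.mem_filter]
  constructor
  · exact fun h => h.2
  · intro h
    refine ⟨List.mem_toFinset.2 ?_, h⟩
    obtain ⟨h1, h2, h3, h4⟩ := h
    rw [posList]
    simp only [bind_pure_comp, List.map_eq_map, List.flatMap_map]
    rw [List.mem_flatMap]
    refine ⟨(p.1 - 1).toNat, List.mem_range.2 (by omega),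
      List.mem_map.2 ⟨p.2, mem_jList_abs.2 ⟨le_trans h1 h3, h4⟩, ?_⟩⟩
    have : (((p.1 - 1).toNat : ℕ) : ℤ) + 1 = p.1 := by omega
    rw [Prod.ext_iff]
    exact ⟨this, rfl⟩

lemma mem_Nfin {n : ℕ} {j : ℤ} : j ∈ Nfin n ↔ j ∈ jList n := List.mem_toFinset

lemma Aset_eq (n : ℕ) : Aset n
    = (Finset.range n).image (fun t : ℕ => (((t:ℤ)+1, (t:ℤ)+1) : ℤ × ℤ)) := by
  unfold Aset
  simp only [bind_pure_comp, Finset.fmap_def, Finset.image_image]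
  rfl

lemma mem_Aset {n : ℕ} {p : ℤ × ℤ} :
    p ∈ Aset n ↔ p.2 = p.1 ∧ 1 ≤ p.1 ∧ p.1 ≤ (n:ℤ) := by
  rw [Aset_eq, Finset.mem_image]
  constructor
  · rintro ⟨t, ht, rfl⟩
    rw [Finset.mem_range] at ht
    exact ⟨rfl, by omega, by omega⟩
  · rintro ⟨h0, h1, h2⟩
    refine ⟨(p.1 - 1).toNat, Finset.mem_range.2 (by omega), ?_⟩
    have : (((p.1 - 1).toNat : ℕ) : ℤ) + 1 = p.1 := by omega
    rw [Prod.ext_iff]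
    exact ⟨this, by rw [h0]; exact this⟩

lemma MO_subset {n : ℕ} {O J : Finset (ℤ × ℤ)} : MO n O J ⊆ J := by
  intro p hp
  rcases Finset.mem_union.1 hp with h | h
  · exact (Finset.mem_inter.1 h).1
  · exact (Finset.mem_filter.1 h).1

lemma ideal_subset_Pfin {n : ℕ} {J : Finset (ℤ × ℤ)} (hJ : IsIdeal n J) :
    J ⊆ Pfin n := fun p hp => mem_Pfin.2 (hJ.1 p hp)

/-- The diagonal characterization: `(i,i) ∈ J ↔ i ≤ k`. -/
lemma diag_iff {n k : ℕ} {J : Finset (ℤ × ℤ)} (hJ : IsIdeal n J)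
    (hJk : (J ∩ Aset n).card = k) {i : ℤ} (h1 : 1 ≤ i) (h2 : i ≤ (n:ℤ)) :
    ((i, i) ∈ J ↔ i ≤ (k:ℤ)) := by
  classical
  set T : Finset ℕ := (Finset.range n).filter (fun t => ((t:ℤ)+1, (t:ℤ)+1) ∈ J) with hT
  have hTcard : T.card = k := by
    have himg : J ∩ Aset n = T.image (fun t : ℕ => (((t:ℤ)+1, (t:ℤ)+1) : ℤ × ℤ)) := by
      ext p
      rw [Finset.mem_inter, mem_Aset, Finset.mem_image]
      constructor
      · rintro ⟨hpJ, h0, hp1, hp2⟩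
        refine ⟨(p.1 - 1).toNat, ?_, ?_⟩
        · rw [hT, Finset.mem_filter, Finset.mem_range]
          have he : (((p.1 - 1).toNat : ℕ) : ℤ) + 1 = p.1 := by omega
          constructor
          · omega
          · rw [he]
            have : p = (p.1, p.1) := by rw [Prod.ext_iff]; exact ⟨rfl, h0⟩
            rwa [← this]
        · have he : (((p.1 - 1).toNat : ℕ) : ℤ) + 1 = p.1 := by omega
          rw [Prod.ext_iff]
          exact ⟨he, by rw [h0]; exact he⟩
      · rintro ⟨t, ht, rfl⟩
        rw [hT, Finset.mem_filter, Finset.mem_range] at ht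
        exact ⟨ht.2, rfl, by omega, by omega⟩
    rw [himg, Finset.card_image_of_injective _ (fun a b hab => by
      rw [Prod.ext_iff] at hab; omega)] at hJk
    exact hJk
  have hdc : ∀ s t : ℕ, s ≤ t → t ∈ T → s ∈ T := by
    intro s t hst ht
    rw [hT, Finset.mem_filter, Finset.mem_range] at ht ⊢
    refine ⟨by omega, hJ.2 _ ht.2 _ (mem_Pfin.2 ?_) ?_⟩
    · refine ⟨by omega, by omega, ?_, ?_⟩ <;>
        · rw [abs_of_nonneg (by positivity)]; try omega
    · refine ⟨by omega, ?_⟩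
      rw [key_eval_pos (by positivity), key_eval_pos (by positivity)]
      omega
  have hiff : ∀ t : ℕ, t ∈ T ↔ t < k := by
    intro t
    constructor
    · intro ht
      have hsub : Finset.range (t+1) ⊆ T := fun s hs =>
        hdc s t (by rw [Finset.mem_range] at hs; omega) ht
      have := Finset.card_le_card hsub
      rw [Finset.card_range, hTcard] at this
      omega
    · intro ht
      by_contra hc
      have hsub : T ⊆ Finset.range t := by
        intro s hs
        rw [Finset.mem_range]
        by_contra hs2
        exact hc (hdc t s (by omega) hs)
      have := Finset.card_le_card hsub
      rw [Finset.card_range, hTcard] at this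
      omega
  have he : ((((i-1).toNat : ℕ) : ℤ) + 1) = i := by omega
  have := hiff (i-1).toNat
  rw [hT, Finset.mem_filter, Finset.mem_range, he] at this
  constructor
  · intro hJi
    have := this.1 ⟨by omega, hJi⟩
    omega
  · intro hik
    exact (this.2 (by omega)).2

lemma diag_mem_J {n : ℕ} {J : Finset (ℤ × ℤ)} (hJ : IsIdeal n J) {i j : ℤ}
    (h : (i, j) ∈ J) : (i, i) ∈ J := by
  obtain ⟨h1, h2, h3, h4⟩ := hJ.1 _ h
  simp only at h1 h2 h3 h4
  have habs : |i| = i := abs_of_pos (by omega)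
  refine hJ.2 _ h _ (mem_Pfin.2 ⟨h1, h2, by rw [habs], by rw [habs]; omega⟩) ?_
  · refine ⟨le_refl _, ?_⟩
    show ordKey n i ≤ ordKey n j
    have h5 : ordKey n i = i := key_eval_pos (by omega)
    rw [h5]
    exact key_ge_row (by omega) h3 h4

end Aux10
namespace Aux10

open Equiv

lemma restCols_absBounds {n : ℕ} {S : Finset (ℤ × ℤ)} (hS : S ⊆ Pfin n) {t j : ℤ}
    (hj : j ∈ restCols n S t) : 1 ≤ t ∧ t ≤ |j| ∧ |j| ≤ (n:ℤ) := by
  obtain ⟨h1, h2, h3⟩ := mem_restCols.1 hj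
  obtain ⟨a1, a2, a3, a4⟩ := mem_Pfin.1 (hS h2)
  exact ⟨a1, a3, a4⟩

lemma rowPerm_fix {n : ℕ} {S : Finset (ℤ × ℤ)} {t v : ℤ} (hvt : v ≠ t)
    (hv : (t, v) ∉ S) : rowPerm n S t v = v :=
  swapsProd_apply_of_not_mem hvt (fun h => hv (mem_restCols.1 h).2.1)

lemma getLastD_cases (l : List ℤ) (d : ℤ) : l.getLastD d = d ∨ l.getLastD d ∈ l := by
  rcases eq_or_ne l [] with rfl | h
  · left; rfl
  · right; rw [getLastD_eq_getLast h]; exact List.getLast_mem h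

lemma rowPerm_step {n : ℕ} {S : Finset (ℤ × ℤ)} (hS : S ⊆ Pfin n) {t v : ℤ}
    (hvt : t < |v|) (hvn : |v| ≤ (n:ℤ)) (ht1 : 1 ≤ t) (hmem : (t, v) ∈ S) :
    rowPerm n S t v
      = ((restCols n S t).filter (fun j => decide (ordKey n j < ordKey n v))).getLastD t := by
  have hvne : v ≠ t := fun h => by rw [h, abs_of_pos (by omega)] at hvt; omega
  have hvmem : v ∈ restCols n S t :=
    mem_restCols.2 ⟨mem_jList_abs.2 ⟨by omega, hvn⟩, hmem, hvne⟩
  rw [rowPerm, swapsProd_apply_mem not_self_mem_restCols restCols_nodup hvmem,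
    takeWhile_eq_filter_of_sorted restCols_pairwise hvmem]

lemma row_eq {n : ℕ} {O S : Finset (ℤ × ℤ)} (hOP : O ⊆ Pfin n) (hSP : S ⊆ Pfin n)
    {t m v : ℤ}
    (hchar : ∀ j, j ∈ jList n → ordKey n j ≤ ordKey n m → ((t, j) ∈ S ↔ (t, j) ∈ O))
    (ht1 : 1 ≤ t) (hvt : t < |v|) (hvn : |v| ≤ (n:ℤ)) (hkey : ordKey n v ≤ ordKey n m) :
    rowPerm n S t v = rowPerm n O t v := by
  have hvj : v ∈ jList n := mem_jList_abs.2 ⟨by omega, hvn⟩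
  by_cases hvO : (t, v) ∈ O
  · have hvS : (t, v) ∈ S := (hchar v hvj hkey).2 hvO
    rw [rowPerm_step hSP hvt hvn ht1 hvS, rowPerm_step hOP hvt hvn ht1 hvO]
    congr 1
    rw [restCols, restCols, List.filter_filter, List.filter_filter]
    apply List.filter_congr
    intro j hj
    by_cases hk : ordKey n j < ordKey n v
    · have hiff := hchar j hj (le_trans (le_of_lt hk) hkey)
      simp [hk, hiff]
    · simp [hk]
  · have hvS : (t, v) ∉ S := fun h => hvO ((hchar v hvj hkey).1 h)
    have hvne : v ≠ t := fun h => by rw [h, abs_of_pos (by omega)] at hvt; omega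
    rw [rowPerm_fix hvne hvS, rowPerm_fix hvne hvO]

lemma chain_eq {n : ℕ} {O S : Finset (ℤ × ℤ)} (hOP : O ⊆ Pfin n) (hSP : S ⊆ Pfin n)
    {i m : ℤ} (hi1 : 1 ≤ i) (him : i ≤ |m|) (hmn : |m| ≤ (n:ℤ))
    (hchar : ∀ t j, 1 ≤ t → t < i → j ∈ jList n → ordKey n j ≤ ordKey n m →
      ((t, j) ∈ S ↔ (t, j) ∈ O)) :
    ∀ la : List ℤ, la.Pairwise (· < ·) → (∀ t ∈ la, 1 ≤ t ∧ t < i) →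
    ∀ v : ℤ, (∀ t ∈ la, t < |v|) → |v| ≤ (n:ℤ) → ordKey n v ≤ ordKey n m →
      la.foldr (fun t x => rowPerm n S t x) v = la.foldr (fun t x => rowPerm n O t x) v := by
  intro la
  induction la using List.reverseRecOn with
  | nil => intro _ _ v _ _ _; rfl
  | append_singleton l t ih =>
    intro hsort hbnd v hv hvn hkey
    rw [List.foldr_append, List.foldr_append]
    simp only [List.foldr_cons, List.foldr_nil]
    have hbt := hbnd t (by simp)
    have hvt : t < |v| := hv t (by simp)
    have heq : rowPerm n S t v = rowPerm n O t v :=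
      row_eq hOP hSP (fun j => hchar t j hbt.1 hbt.2) hbt.1 hvt hvn hkey
    rw [heq]
    have hsort' := List.pairwise_append.1 hsort
    have hlt : ∀ s ∈ l, s < t := fun s hs => hsort'.2.2 s hs t (by simp)
    have hkm : (i:ℤ) ≤ ordKey n m := key_ge_row hi1 him hmn
    have hprops : (∀ s ∈ l, s < |rowPerm n O t v|) ∧ |rowPerm n O t v| ≤ (n:ℤ) ∧
        ordKey n (rowPerm n O t v) ≤ ordKey n m := by
      by_cases hvO : (t, v) ∈ O
      · rw [rowPerm_step hOP hvt hvn hbt.1 hvO]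
        rcases getLastD_cases
            ((restCols n O t).filter (fun j => decide (ordKey n j < ordKey n v))) t with hc | hc
        · rw [hc]
          have habs : |t| = t := abs_of_pos (by omega)
          have h1 : ordKey n t = t := key_eval_pos (by omega)
          exact ⟨fun s hs => by rw [habs]; exact hlt s hs, by rw [habs]; omega, by rw [h1]; omega⟩
        · rw [List.mem_filter] at hc
          obtain ⟨hc1, hc2⟩ := hc
          rw [decide_eq_true_eq] at hc2
          obtain ⟨b1, b2, b3⟩ := restCols_absBounds hOP hc1
          exact ⟨fun s hs => lt_of_lt_of_le (hlt s hs) b2, b3,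
            le_trans (le_of_lt hc2) hkey⟩
      · have hvne : v ≠ t := fun h => by rw [h, abs_of_pos (by omega)] at hvt; omega
        rw [rowPerm_fix hvne hvO]
        exact ⟨fun s hs => lt_trans (hlt s hs) hvt, hvn, hkey⟩
    exact ih hsort'.1 (fun s hs => hbnd s (by simp [hs])) _ hprops.1 hprops.2.1 hprops.2.2

lemma Wpart_foldr {n : ℕ} (S : Finset (ℤ × ℤ)) (l : List ℤ) (v : ℤ) :
    Wpart n S l v = l.foldr (fun t x => rowPerm n S t x) v := by
  rw [Wpart, prod_apply, List.foldr_map]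

lemma fix_rows {n : ℕ} {S : Finset (ℤ × ℤ)} (hSP : S ⊆ Pfin n) {i : ℤ} (hi1 : 1 ≤ i) :
    ∀ lb : List ℤ, (∀ t ∈ lb, i < t) →
      lb.foldr (fun t x => rowPerm n S t x) i = i := by
  intro lb
  induction lb with
  | nil => intro _; rfl
  | cons t l ih =>
    intro hb
    rw [List.foldr_cons, ih (fun s hs => hb s (by simp [hs]))]
    have hti := hb t (by simp)
    apply rowPerm_fix (by omega)
    intro hmem
    obtain ⟨a1, a2, a3, a4⟩ := mem_Pfin.1 (hSP hmem)
    rw [abs_of_pos (by omega : (0:ℤ) < i)] at a3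
    omega

lemma rowsList_pairwise {n : ℕ} : (rowsList n).Pairwise (· < ·) := by
  rw [rowsList]
  exact List.pairwise_map.2 ((List.pairwise_lt_range (n := n)).imp (fun h => by omega))

lemma wPerm_apply_chain {n : ℕ} {S : Finset (ℤ × ℤ)} (hSP : S ⊆ Pfin n) {i : ℤ}
    {la lb : List ℤ} (hsplit : rowsList n = la ++ i :: lb)
    (hla : ∀ t ∈ la, 1 ≤ t ∧ t < i) (hlb : ∀ t ∈ lb, i < t ∧ t ≤ (n:ℤ)) (hi1 : 1 ≤ i) :
    wPerm n S i = la.foldr (fun t x => rowPerm n S t x) ((restCols n S i).getLastD i) := by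
  have h0 : wPerm n S i = (rowsList n).foldr (fun t x => rowPerm n S t x) i := by
    rw [wPerm_eq, prod_apply, List.foldr_map]
  rw [h0, hsplit, List.foldr_append, List.foldr_cons,
    fix_rows hSP hi1 lb (fun t ht => (hlb t ht).1)]
  congr 1
  rw [rowPerm, swapsProd_apply_self not_self_mem_restCols restCols_nodup]

lemma main_core {n : ℕ} {O S : Finset (ℤ × ℤ)} (hOP : O ⊆ Pfin n) (hSP : S ⊆ Pfin n)
    {i m : ℤ} (hi1 : 1 ≤ i) (hin : i ≤ (n:ℤ)) (him : i ≤ |m|) (hmn : |m| ≤ (n:ℤ))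
    (hrowi : (restCols n S i).getLastD i = m)
    (hchar : ∀ t j, 1 ≤ t → t < i → j ∈ jList n → ordKey n j ≤ ordKey n m →
      ((t, j) ∈ S ↔ (t, j) ∈ O)) :
    ∀ la lb : List ℤ, rowsList n = la ++ i :: lb → (∀ t ∈ la, 1 ≤ t ∧ t < i) →
      (∀ t ∈ lb, i < t ∧ t ≤ (n:ℤ)) →
      (wPerm n O)⁻¹ (wPerm n S i) = (Wpart n O (i :: lb))⁻¹ m := by
  intro la lb hsplit hla hlb
  have hlasort : la.Pairwise (· < ·) := by
    have := rowsList_pairwise (n := n)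
    rw [hsplit] at this
    exact (List.pairwise_append.1 this).1
  have h1 : wPerm n S i = Wpart n O la m := by
    rw [wPerm_apply_chain hSP hsplit hla hlb hi1, hrowi, Wpart_foldr]
    exact chain_eq hOP hSP hi1 him hmn hchar la hlasort hla m
      (fun t ht => lt_of_lt_of_le (hla t ht).2 him) hmn (le_refl _)
  have h2 : wPerm n O = Wpart n O la * Wpart n O (i :: lb) := by
    rw [wPerm_eq, hsplit, Wpart, Wpart, ← List.prod_append, ← List.map_append]
  rw [h1, h2, mul_inv_rev, Equiv.Perm.mul_apply, Equiv.Perm.inv_def, Equiv.Perm.inv_def, Equiv.symm_apply_apply]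

lemma Wpart_inv_bound {n : ℕ} {O : Finset (ℤ × ℤ)} (hOP : O ⊆ Pfin n) {i : ℤ} (hi1 : 1 ≤ i) :
    ∀ l : List ℤ, (∀ t ∈ l, i ≤ t ∧ t ≤ (n:ℤ)) → ∀ v, i ≤ |v| → |v| ≤ (n:ℤ) →
      i ≤ |(Wpart n O l)⁻¹ v| ∧ |(Wpart n O l)⁻¹ v| ≤ (n:ℤ) := by
  intro l
  induction l with
  | nil =>
    intro _ v h1 h2
    simpa [Wpart] using And.intro h1 h2
  | cons t l ih =>
    intro hb v h1 h2
    have hW : Wpart n O (t :: l) = rowPerm n O t * Wpart n O l := by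
      rw [Wpart, List.map_cons, List.prod_cons]; rfl
    rw [hW, mul_inv_rev, Equiv.Perm.mul_apply]
    apply ih (fun s hs => hb s (by simp [hs]))
    · have hbt := hb t (by simp)
      have hmem := swapsProd_inv_apply_mem_insert t v (restCols n O t)
      have hrw : (rowPerm n O t)⁻¹ v = (swapsProd t (restCols n O t))⁻¹ v := rfl
      rw [hrw]
      rcases List.mem_cons.1 hmem with h | h
      · rw [h]; exact h1
      rcases List.mem_cons.1 h with h | h
      · rw [h, abs_of_pos (by omega : (0:ℤ) < t)]; exact hbt.1
      · obtain ⟨b1, b2, b3⟩ := restCols_absBounds hOP h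
        exact le_trans hbt.1 b2
    · have hbt := hb t (by simp)
      have hmem := swapsProd_inv_apply_mem_insert t v (restCols n O t)
      have hrw : (rowPerm n O t)⁻¹ v = (swapsProd t (restCols n O t))⁻¹ v := rfl
      rw [hrw]
      rcases List.mem_cons.1 hmem with h | h
      · rw [h]; exact h2
      rcases List.mem_cons.1 h with h | h
      · rw [h, abs_of_pos (by omega : (0:ℤ) < t)]; exact hbt.2
      · obtain ⟨b1, b2, b3⟩ := restCols_absBounds hOP h
        exact b3

end Aux10
namespace Aux10

lemma MO_subset' {n : ℕ} (O P : Finset (ℤ × ℤ)) : MO n O P ⊆ P := MO_subset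

lemma mem_princ {n : ℕ} {p q : ℤ × ℤ} :
    q ∈ princ n p ↔ q ∈ Pfin n ∧ ple n q p := Finset.mem_filter

lemma getLastD_eq_of_max {n : ℕ} {l : List ℤ} {m : ℤ}
    (hp : l.Pairwise (fun a b => ordKey n a < ordKey n b)) (hm : m ∈ l)
    (hmax : ∀ j ∈ l, ordKey n j ≤ ordKey n m) (d : ℤ) : l.getLastD d = m := by
  rcases pairwise_getLastD hp hm d with h | h
  · exact h.symm
  · have hne : l ≠ [] := List.ne_nil_of_mem hm
    have hmem : l.getLastD d ∈ l := by
      rw [getLastD_eq_getLast hne]; exact List.getLast_mem hne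
    exact absurd (hmax _ hmem) (not_le.2 h)

/-- The big setup lemma: everything about row `i ≤ k` of `M = M_O(J)`. -/
lemma row_setup {n k : ℕ} {O J : Finset (ℤ × ℤ)} (hA : Aset n ⊆ O) (hO : O ⊆ Pfin n)
    (hJ : IsIdeal n J) (hJk : (J ∩ Aset n).card = k) {i : ℤ} (hi1 : 1 ≤ i)
    (hik : i ≤ (k:ℤ)) (hin : i ≤ (n:ℤ)) :
    ∃ m : ℤ,
      (restCols n (MO n O J) i).getLastD i = m ∧
      (i, m) ∈ MO n O J ∧ i ≤ |m| ∧ |m| ≤ (n:ℤ) ∧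
      (∀ j, (i, j) ∈ MO n O J → ordKey n j ≤ ordKey n m) ∧
      (∀ t j, 1 ≤ t → t ≤ i → (t, j) ∈ O → ordKey n j ≤ ordKey n m →
        (t, j) ∈ MO n O J) ∧
      (∀ t j, (t, j) ∈ MO n O J → t ≤ i → ordKey n j ≤ ordKey n m →
        (t ≠ i ∨ ordKey n j < ordKey n m) → (t, j) ∈ O) ∧
      wOJ n O J i = rMap n O i m ∧
      i ≤ |wOJ n O J i| ∧ |wOJ n O J i| ≤ (n:ℤ) := by
  classical
  set M := MO n O J with hM
  have hMJ : M ⊆ J := MO_subset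
  have hMP : M ⊆ Pfin n := fun p hp => ideal_subset_Pfin hJ (hMJ hp)
  have hiiJ : (i, i) ∈ J := (diag_iff hJ hJk hi1 hin).2 hik
  have hiiA : ((i, i) : ℤ × ℤ) ∈ Aset n := mem_Aset.2 ⟨rfl, hi1, hin⟩
  have hiiM : (i, i) ∈ M :=
    Finset.mem_union.2 (Or.inl (Finset.mem_inter.2 ⟨hiiJ, hA hiiA⟩))
  set m := (restCols n M i).getLastD i with hmdef
  have hmM : (i, m) ∈ M ∧ i ≤ |m| ∧ |m| ≤ (n:ℤ) := by
    rcases getLastD_cases (restCols n M i) i with hc | hc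
    · rw [hmdef, hc]
      exact ⟨hiiM, by rw [abs_of_pos (by omega)], by rw [abs_of_pos (by omega)]; exact hin⟩
    · rw [hmdef]
      obtain ⟨b1, b2, b3⟩ := restCols_absBounds hMP hc
      exact ⟨(mem_restCols.1 hc).2.1, b2, b3⟩
  obtain ⟨hmM, him, hmn⟩ := hmM
  have hmJ : (i, m) ∈ J := hMJ hmM
  have hkeyim : i ≤ ordKey n m := key_ge_row hi1 him hmn
  have hmaxkey : ∀ j, (i, j) ∈ M → ordKey n j ≤ ordKey n m := by
    intro j hj
    rcases eq_or_ne j i with rfl | hne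
    · rw [key_eval_pos (by omega)]; exact hkeyim
    · obtain ⟨a1, a2, a3, a4⟩ := mem_Pfin.1 (hMP hj)
      have a3' : i ≤ |j| := a3
      have a4' : |j| ≤ (n:ℤ) := a4
      have hjr : j ∈ restCols n M i :=
        mem_restCols.2 ⟨mem_jList_abs.2 ⟨le_trans hi1 a3', a4'⟩, hj, hne⟩
      rcases pairwise_getLastD restCols_pairwise hjr i with h | h
      · rw [← hmdef] at h; rw [← h]
      · rw [← hmdef] at h; exact le_of_lt h
  have charM1 : ∀ t j, 1 ≤ t → t ≤ i → (t, j) ∈ O → ordKey n j ≤ ordKey n m →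
      (t, j) ∈ M := by
    intro t j h1 h2 hOj hkey
    have hJj : (t, j) ∈ J := hJ.2 _ hmJ _ (hO hOj) ⟨h2, hkey⟩
    exact Finset.mem_union.2 (Or.inl (Finset.mem_inter.2 ⟨hJj, hOj⟩))
  have charM2 : ∀ t j, (t, j) ∈ M → t ≤ i → ordKey n j ≤ ordKey n m →
      (t ≠ i ∨ ordKey n j < ordKey n m) → (t, j) ∈ O := by
    intro t j hj h2 hkey hdisj
    rcases Finset.mem_union.1 hj with h | h
    · exact (Finset.mem_inter.1 h).2
    · obtain ⟨hjJ, hmax⟩ := Finset.mem_filter.1 h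
      have := hmax (i, m) hmJ ⟨h2, hkey⟩
      rw [Prod.ext_iff] at this
      simp only at this
      rcases hdisj with hd | hd
      · exact absurd this.1.symm hd
      · rw [this.2] at hd; omega
  -- the principal-ideal companion
  have hPfinIM : (i, m) ∈ Pfin n := mem_Pfin.2 ⟨hi1, hin, him, hmn⟩
  set Pr := princ n (i, m) with hPr
  set M' := MO n O Pr with hM'
  have hPrP : Pr ⊆ Pfin n := Finset.filter_subset _ _
  have hM'P : M' ⊆ Pfin n := fun p hp => hPrP (MO_subset hp)
  have hIMprinc : (i, m) ∈ Pr := mem_princ.2 ⟨hPfinIM, le_refl _, le_refl _⟩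
  have hIMmax : (i, m) ∈ maxPrec n Pr := by
    rw [maxPrec, Finset.mem_filter]
    refine ⟨hIMprinc, ?_⟩
    intro q hq hle
    obtain ⟨hqP, hq1, hq2⟩ := mem_princ.1 hq
    obtain ⟨c1, c2, c3, c4⟩ := mem_Pfin.1 hqP
    have h1 : q.1 = i := le_antisymm hq1 hle.1
    have h2 : q.2 = m := key_inj (n := i) (by omega) c4 (by omega) hmn
      (le_antisymm hq2 hle.2)
    rw [Prod.ext_iff]
    exact ⟨h1, h2⟩
  have hrowi' : (restCols n M' i).getLastD i = m := by
    rcases eq_or_ne m i with hmi | hmi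
    · have hempty : restCols n M' i = [] := by
        rw [List.eq_nil_iff_forall_not_mem]
        intro j hj
        obtain ⟨hj1, hj2, hj3⟩ := mem_restCols.1 hj
        have hjPr : (i, j) ∈ Pr := MO_subset hj2
        have hple : ordKey n j ≤ ordKey n m := (mem_princ.1 hjPr).2.2
        obtain ⟨c1, c2, c3, c4⟩ := mem_Pfin.1 (hPrP hjPr)
        have c3' : i ≤ |j| := c3
        have c4' : |j| ≤ (n:ℤ) := c4
        have hgt := key_gt_row (n := n) hi1 c3' c4' hj3
        rw [hmi] at hple
        rw [key_eval_pos (n := n) (by omega : (0:ℤ) < i)] at hple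
        omega
      rw [hempty, hmi]; rfl
    · apply getLastD_eq_of_max restCols_pairwise
      · exact mem_restCols.2 ⟨mem_jList_abs.2 ⟨le_trans hi1 him, hmn⟩,
          Finset.mem_union.2 (Or.inr hIMmax), hmi⟩
      · intro j hj
        obtain ⟨hj1, hj2, hj3⟩ := mem_restCols.1 hj
        exact ((mem_princ.1 (MO_subset hj2)).2.2 : ordKey n j ≤ ordKey n m)
  have hchar' : ∀ t j, 1 ≤ t → t < i → j ∈ jList n → ordKey n j ≤ ordKey n m →
      ((t, j) ∈ M' ↔ (t, j) ∈ O) := by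
    intro t j h1 h2 hjl hkey
    constructor
    · intro h
      rcases Finset.mem_union.1 h with h | h
      · exact (Finset.mem_inter.1 h).2
      · obtain ⟨hjPr, hmax⟩ := Finset.mem_filter.1 h
        have := hmax (i, m) hIMprinc (mem_princ.1 hjPr).2
        rw [Prod.ext_iff] at this
        simp only at this
        omega
    · intro h
      refine Finset.mem_union.2 (Or.inl (Finset.mem_inter.2 ⟨?_, h⟩))
      exact mem_princ.2 ⟨hO h, by omega, hkey⟩
  have hcharM : ∀ t j, 1 ≤ t → t < i → j ∈ jList n → ordKey n j ≤ ordKey n m →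
      ((t, j) ∈ M ↔ (t, j) ∈ O) := by
    intro t j h1 h2 hjl hkey
    exact ⟨fun h => charM2 t j h (le_of_lt h2) hkey (Or.inl (by omega)),
      fun h => charM1 t j h1 (le_of_lt h2) h hkey⟩
  obtain ⟨la, lb, hsplit, hla, hlb⟩ := rowsList_split hi1 hin
  have hcore1 := main_core hO hMP hi1 hin him hmn hmdef.symm hcharM la lb hsplit hla hlb
  have hcore2 := main_core hO hM'P hi1 hin him hmn hrowi' hchar' la lb hsplit hla hlb
  have hbound := Wpart_inv_bound hO hi1 (i :: lb)
    (by
      intro t ht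
      rcases List.mem_cons.1 ht with rfl | h
      · exact ⟨le_refl _, hin⟩
      · exact ⟨le_of_lt (hlb t h).1, (hlb t h).2⟩) m him hmn
  have hwOJ : wOJ n O J i = (wPerm n O)⁻¹ (wPerm n M i) := by
    rw [wOJ, Equiv.Perm.mul_apply, hM]
  have hrM : rMap n O i m = (wPerm n O)⁻¹ (wPerm n M' i) := by
    rw [rMap, wOJ, Equiv.Perm.mul_apply, hM', hPr]
  refine ⟨m, hmdef.symm, hmM, him, hmn, hmaxkey, charM1, charM2, ?_, ?_, ?_⟩
  · rw [hwOJ, hrM, hcore1, hcore2]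
  · rw [hwOJ, hcore1]; exact hbound.1
  · rw [hwOJ, hcore1]; exact hbound.2

end Aux10
namespace Aux10

lemma prevO_spec {n : ℕ} {O : Finset (ℤ × ℤ)} (hA : Aset n ⊆ O) (hO : O ⊆ Pfin n)
    {i j : ℤ} (hi1 : 1 ≤ i) (hin : i ≤ (n:ℤ)) (hkey : i < ordKey n j) :
    (i, prevO n O i j) ∈ O ∧ ordKey n (prevO n O i j) < ordKey n j ∧
      ∀ j'', (i, j'') ∈ O → ordKey n j'' < ordKey n j →
        ordKey n j'' ≤ ordKey n (prevO n O i j) := by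
  classical
  set F := (Nfin n).filter (fun j' => (i, j') ∈ O ∧ ordKey n j' < ordKey n j) with hF
  have habsi : |i| = i := abs_of_pos (by omega)
  have hiF : i ∈ F := by
    rw [hF, Finset.mem_filter]
    refine ⟨mem_Nfin.2 (mem_jList_abs.2 ⟨by omega, by omega⟩), hA (mem_Aset.2 ⟨rfl, hi1, hin⟩), ?_⟩
    rw [key_eval_pos (by omega)]
    exact hkey
  set G := F.image (ordKey n) with hG
  have hGne : G.Nonempty := ⟨ordKey n i, Finset.mem_image_of_mem _ hiF⟩
  obtain ⟨b, hb⟩ := Finset.max_of_nonempty hGne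
  have hbG : b ∈ G := Finset.mem_of_max hb
  obtain ⟨j₀, hj₀F, hj₀key⟩ := Finset.mem_image.1 hbG
  obtain ⟨hj₀N, hj₀O, hj₀lt⟩ := Finset.mem_filter.1 hj₀F
  have hj₀abs : 1 ≤ |j₀| ∧ |j₀| ≤ (n:ℤ) := mem_jList_abs.1 (mem_Nfin.1 hj₀N)
  have hprev : prevO n O i j = j₀ := by
    rw [prevO, ← hF, ← hG, hb]
    show invOrdKey n b = j₀
    rw [← hj₀key, invOrdKey_ordKey hj₀abs.1 hj₀abs.2]
  rw [hprev]
  refine ⟨hj₀O, hj₀lt, ?_⟩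
  intro j'' hO'' hlt''
  have hj''N : j'' ∈ Nfin n := by
    obtain ⟨d1, d2, d3, d4⟩ := mem_Pfin.1 (hO hO'')
    have d3' : i ≤ |j''| := d3
    have d4' : |j''| ≤ (n:ℤ) := d4
    exact mem_Nfin.2 (mem_jList_abs.2 ⟨by omega, d4'⟩)
  have hmem : ordKey n j'' ∈ G :=
    Finset.mem_image_of_mem _ (Finset.mem_filter.2 ⟨hj''N, hO'', hlt''⟩)
  have := Finset.le_max hmem
  rw [hb, ← hj₀key] at this
  exact_mod_cast this

end Aux10
namespace Aux10

lemma row_count {n k : ℕ} {O J : Finset (ℤ × ℤ)} (hA : Aset n ⊆ O) (hO : O ⊆ Pfin n)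
    (hJ : IsIdeal n J) (hJk : (J ∩ Aset n).card = k) {i : ℤ} (hi1 : 1 ≤ i)
    (hik : i ≤ (k:ℤ)) (hin : i ≤ (n:ℤ)) (c : ℤ) :
    (((Nfin n).filter (fun j => (i, j) ∈ MO n O J ∧ rMap n O i j = c)).card : ℝ)
      - (((Nfin n).filter (fun j => (i, j) ∈ MO n O J ∧ j ≠ i ∧
          rMap n O i (prevO n O i j) = c)).card : ℝ)
      = if c = wOJ n O J i then 1 else 0 := by
  classical
  obtain ⟨m, hmdef, hmM, him, hmn, hmaxkey, charM1, charM2, hwr, hb1, hb2⟩ :=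
    row_setup hA hO hJ hJk hi1 hik hin
  set M := MO n O J with hM
  have hMP : M ⊆ Pfin n := fun p hp => ideal_subset_Pfin hJ (MO_subset hp)
  have habs : ∀ j, (i, j) ∈ M → i ≤ |j| ∧ |j| ≤ (n:ℤ) := by
    intro j hj
    obtain ⟨a1, a2, a3, a4⟩ := mem_Pfin.1 (hMP hj)
    exact ⟨a3, a4⟩
  have hNmem : ∀ j, (i, j) ∈ M → j ∈ Nfin n := by
    intro j hj
    obtain ⟨a3, a4⟩ := habs j hj
    exact mem_Nfin.2 (mem_jList_abs.2 ⟨by omega, a4⟩)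
  have hkeygt : ∀ j, (i, j) ∈ M → j ≠ i → i < ordKey n j := by
    intro j hj hne
    obtain ⟨a3, a4⟩ := habs j hj
    exact key_gt_row hi1 a3 a4 hne
  have hstrict : ∀ j, (i, j) ∈ M → j ≠ m → ordKey n j < ordKey n m := by
    intro j hj hne
    rcases lt_or_eq_of_le (hmaxkey j hj) with h | h
    · exact h
    · obtain ⟨a3, a4⟩ := habs j hj
      exact absurd (key_inj (n := i) (by omega) a4 (by omega) hmn h) hne
  have helemO : ∀ j, (i, j) ∈ M → ordKey n j < ordKey n m → (i, j) ∈ O :=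
    fun j hj hlt => charM2 i j hj (le_refl _) (le_of_lt hlt) (Or.inr hlt)
  set B2 := (Nfin n).filter (fun j => (i, j) ∈ M ∧ j ≠ i ∧
    rMap n O i (prevO n O i j) = c) with hB2
  set B2' := (Nfin n).filter (fun j => (i, j) ∈ M ∧ j ≠ m ∧ rMap n O i j = c) with hB2'
  set A1 := (Nfin n).filter (fun j => (i, j) ∈ M ∧ rMap n O i j = c) with hA1
  -- properties of prevO on row elements
  have hprev : ∀ j, (i, j) ∈ M → j ≠ i →
      (i, prevO n O i j) ∈ M ∧ prevO n O i j ≠ m ∧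
        ordKey n (prevO n O i j) < ordKey n j ∧
        (∀ j'', (i, j'') ∈ O → ordKey n j'' < ordKey n j →
          ordKey n j'' ≤ ordKey n (prevO n O i j)) := by
    intro j hj hne
    obtain ⟨hpO, hplt, hpmax⟩ := prevO_spec hA hO hi1 hin (hkeygt j hj hne)
    have hpkey : ordKey n (prevO n O i j) < ordKey n m :=
      lt_of_lt_of_le hplt (hmaxkey j hj)
    have hpM : (i, prevO n O i j) ∈ M :=
      charM1 i _ hi1 (le_refl _) hpO (le_of_lt hpkey)
    exact ⟨hpM, fun h => by rw [h] at hpkey; omega, hplt, hpmax⟩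
  have hcard : B2.card = B2'.card := by
    apply Finset.card_bij (fun j _ => prevO n O i j)
    · intro j hj
      rw [hB2, Finset.mem_filter] at hj
      obtain ⟨hjN, hjM, hjne, hjr⟩ := hj
      obtain ⟨hpM, hpne, hplt, hpmax⟩ := hprev j hjM hjne
      rw [hB2', Finset.mem_filter]
      exact ⟨hNmem _ hpM, hpM, hpne, hjr⟩
    · intro j1 hj1 j2 hj2 hpeq
      rw [hB2, Finset.mem_filter] at hj1 hj2
      obtain ⟨h1N, h1M, h1ne, h1r⟩ := hj1
      obtain ⟨h2N, h2M, h2ne, h2r⟩ := hj2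
      obtain ⟨p1M, p1ne, p1lt, p1max⟩ := hprev j1 h1M h1ne
      obtain ⟨p2M, p2ne, p2lt, p2max⟩ := hprev j2 h2M h2ne
      obtain ⟨a3, a4⟩ := habs j1 h1M
      obtain ⟨b3, b4⟩ := habs j2 h2M
      rcases lt_trichotomy (ordKey n j1) (ordKey n j2) with h | h | h
      · exfalso
        have hj1m : j1 ≠ m := by
          intro he
          have := hmaxkey j2 h2M
          rw [he] at h
          omega
        have hO1 : (i, j1) ∈ O := helemO j1 h1M (hstrict j1 h1M hj1m)
        have := p2max j1 hO1 h
        rw [← hpeq] at this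
        omega
      · exact key_inj (n := i) (by omega) a4 (by omega) b4 h
      · exfalso
        have hj2m : j2 ≠ m := by
          intro he
          have := hmaxkey j1 h1M
          rw [he] at h
          omega
        have hO2 : (i, j2) ∈ O := helemO j2 h2M (hstrict j2 h2M hj2m)
        have := p1max j2 hO2 h
        rw [hpeq] at this
        omega
    · intro j' hj'
      rw [hB2', Finset.mem_filter] at hj'
      obtain ⟨hj'N, hj'M, hj'ne, hj'r⟩ := hj'
      have hj'key : ordKey n j' < ordKey n m := hstrict j' hj'M hj'ne
      have hj'O : (i, j') ∈ O := helemO j' hj'M hj'key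
      obtain ⟨a3', a4'⟩ := habs j' hj'M
      have hj'ge : i ≤ ordKey n j' := key_ge_row hi1 a3' a4'
      -- choose the minimal-key element of M-row above j'
      set T := (Nfin n).filter (fun j => (i, j) ∈ M ∧ ordKey n j' < ordKey n j) with hT
      have hmT : m ∈ T := by
        rw [hT, Finset.mem_filter]
        exact ⟨hNmem _ hmM, hmM, hj'key⟩
      set G := T.image (ordKey n) with hG
      obtain ⟨b, hbmin⟩ := Finset.min_of_nonempty ⟨ordKey n m, Finset.mem_image_of_mem _ hmT⟩
      have hbG : b ∈ G := Finset.mem_of_min hbmin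
      obtain ⟨j₀, hj₀T, hj₀key⟩ := Finset.mem_image.1 hbG
      rw [hT, Finset.mem_filter] at hj₀T
      obtain ⟨hj₀N, hj₀M, hj₀gt⟩ := hj₀T
      have hj₀min : ∀ x ∈ T, ordKey n j₀ ≤ ordKey n x := by
        intro x hx
        have := Finset.min_le (Finset.mem_image_of_mem (ordKey n) hx)
        rw [hbmin, ← hj₀key] at this
        exact_mod_cast this
      have hj₀ne : j₀ ≠ i := by
        intro he
        rw [he] at hj₀gt
        rw [key_eval_pos (n := n) (by omega : (0:ℤ) < i)] at hj₀gt
        omega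
      obtain ⟨hpO, hplt, hpmax⟩ := prevO_spec hA hO hi1 hin (hkeygt j₀ hj₀M hj₀ne)
      have hple : ordKey n j' ≤ ordKey n (prevO n O i j₀) := hpmax j' hj'O hj₀gt
      have hpeq : prevO n O i j₀ = j' := by
        rcases lt_or_eq_of_le hple with hlt | he
        · exfalso
          have hpkey : ordKey n (prevO n O i j₀) < ordKey n m :=
            lt_of_lt_of_le hplt (hmaxkey j₀ hj₀M)
          have hpM : (i, prevO n O i j₀) ∈ M :=
            charM1 i _ hi1 (le_refl _) hpO (le_of_lt hpkey)
          have hpT : prevO n O i j₀ ∈ T := by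
            rw [hT, Finset.mem_filter]
            exact ⟨hNmem _ hpM, hpM, hlt⟩
          have := hj₀min _ hpT
          omega
        · obtain ⟨e1, e2, e3, e4⟩ := mem_Pfin.1 (hO hpO)
          have e3' : i ≤ |(prevO n O i j₀)| := e3
          have e4' : |(prevO n O i j₀)| ≤ (n:ℤ) := e4
          exact key_inj (n := i) (by omega) e4' (by omega) a4' he.symm
      refine ⟨j₀, ?_, hpeq⟩
      rw [hB2, Finset.mem_filter]
      refine ⟨hj₀N, hj₀M, hj₀ne, ?_⟩
      rw [hpeq]
      exact hj'r
  -- A1 vs B2'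
  have hsub : B2' ⊆ A1 := by
    intro j hj
    rw [hB2', Finset.mem_filter] at hj
    rw [hA1, Finset.mem_filter]
    exact ⟨hj.1, hj.2.1, hj.2.2.2⟩
  have hdiff : A1 \ B2' = if rMap n O i m = c then {m} else ∅ := by
    ext j
    rw [Finset.mem_sdiff, hA1, hB2', Finset.mem_filter, Finset.mem_filter]
    constructor
    · rintro ⟨⟨hjN, hjM, hjr⟩, hnot⟩
      have hjm : j = m := by
        by_contra hne
        exact hnot ⟨hjN, hjM, hne, hjr⟩
      rw [hjm] at hjr
      rw [if_pos hjr]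
      simp [hjm]
    · intro hj
      by_cases hr : rMap n O i m = c
      · rw [if_pos hr] at hj
        rw [Finset.mem_singleton] at hj
        subst hj
        exact ⟨⟨hNmem _ hmM, hmM, hr⟩, fun h => h.2.2.1 rfl⟩
      · rw [if_neg hr] at hj
        cases hj
  have hcards : A1.card = B2'.card + (if rMap n O i m = c then 1 else 0) := by
    have h1 := Finset.card_sdiff_of_subset hsub
    rw [hdiff] at h1
    have h2 : (if rMap n O i m = c then ({m} : Finset ℤ) else ∅).card
        = (if rMap n O i m = c then 1 else 0) := by
      split <;> simp
    rw [h2] at h1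
    have := Finset.card_le_card hsub
    omega
  rw [hcard, hcards]
  push_cast
  rw [hwr]
  by_cases hc : c = rMap n O i m
  · rw [if_pos hc.symm, if_pos hc]
    ring
  · rw [if_neg (show ¬(rMap n O i m = c) from fun h => hc h.symm), if_neg hc]
    ring

lemma row_final {n k : ℕ} {O J : Finset (ℤ × ℤ)} (hA : Aset n ⊆ O) (hO : O ⊆ Pfin n)
    (hJ : IsIdeal n J) (hJk : (J ∩ Aset n).card = k) {i : ℤ} (hi1 : 1 ≤ i)
    (hin : i ≤ (n:ℤ)) (c : ℤ) (A1 B2 : Finset ℤ)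
    (h1 : ∀ j, j ∈ A1 ↔ (j ∈ Nfin n ∧ ((i, j) ∈ MO n O J ∧ rMap n O i j = c)))
    (h2 : ∀ j, j ∈ B2 ↔ (j ∈ Nfin n ∧ ((i, j) ∈ MO n O J ∧ j ≠ i ∧
      rMap n O i (prevO n O i j) = c))) :
    (A1.card : ℝ) - (B2.card : ℝ)
      = if 1 ≤ i ∧ i ≤ (k:ℤ) ∧ c = wOJ n O J i then 1 else 0 := by
  classical
  by_cases hik : i ≤ (k:ℤ)
  · have hA1eq : A1 = (Nfin n).filter (fun j => (i, j) ∈ MO n O J ∧ rMap n O i j = c) := by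
      ext j
      rw [h1, Finset.mem_filter]
    have hB2eq : B2 = (Nfin n).filter (fun j => (i, j) ∈ MO n O J ∧ j ≠ i ∧
        rMap n O i (prevO n O i j) = c) := by
      ext j
      rw [h2, Finset.mem_filter]
    rw [hA1eq, hB2eq, row_count hA hO hJ hJk hi1 hik hin c]
    by_cases hcc : c = wOJ n O J i
    · rw [if_pos hcc, if_pos ⟨hi1, hik, hcc⟩]
    · rw [if_neg hcc, if_neg (fun h => hcc h.2.2)]
  · have hno : ∀ j, (i, j) ∉ MO n O J := by
      intro j hj
      have hd1 := diag_mem_J hJ (MO_subset hj)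
      have hd2 := (diag_iff hJ hJk hi1 hin).1 hd1
      omega
    have hA1e : A1 = ∅ :=
      Finset.eq_empty_iff_forall_notMem.2 (fun j hj => hno j ((h1 j).1 hj).2.1)
    have hB2e : B2 = ∅ :=
      Finset.eq_empty_iff_forall_notMem.2 (fun j hj => hno j ((h2 j).1 hj).2.1)
    rw [hA1e, hB2e, if_neg (fun h => hik h.2.1)]
    simp

end Aux10
open Aux10

/-- For `J ∈ 𝒥ₖ`, `ξ(1_{M_O(J)}) = 1_{{(i, w^{O,J}(i)) : 1 ≤ i ≤ k}}`. -/

theorem stmt10 (n k : ℕ) (O J : Finset (ℤ × ℤ)) (hA : Aset n ⊆ O) (hO : O ⊆ Pfin n)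
    (hJ : IsIdeal n J) (hJk : (J ∩ Aset n).card = k) :
    xiMap n O (indicMO n O J)
      = fun q => if 1 ≤ q.1 ∧ q.1 ≤ (k : ℤ) ∧ q.2 = wOJ n O J q.1 then 1 else 0 := by
  classical
  have hMP : MO n O J ⊆ Pfin n := fun p hp => ideal_subset_Pfin hJ (MO_subset hp)
  have hkn : (k:ℤ) ≤ (n:ℤ) := by
    have h1 : (J ∩ Aset n).card ≤ (Aset n).card :=
      Finset.card_le_card Finset.inter_subset_right
    have h2 : (Aset n).card ≤ n := by
      rw [Aset_eq]
      exact le_trans Finset.card_image_le (le_of_eq (Finset.card_range n))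
    rw [hJk] at h1
    exact_mod_cast le_trans h1 h2
  funext q
  obtain ⟨i, c⟩ := q
  simp only [xiMap, indicMO]
  by_cases hP : inP n (i, c)
  · rw [if_pos hP]
    have hi1 : (1:ℤ) ≤ i := hP.1
    have hin : i ≤ (n:ℤ) := hP.2.1
    rw [Finset.sum_boole, Finset.sum_boole]
    refine row_final hA hO hJ hJk hi1 hin c _ _ ?_ ?_
    · intro j
      rw [Finset.mem_filter, Finset.mem_filter]
      constructor
      · rintro ⟨⟨hN, hp⟩, hm⟩
        exact ⟨hN, hm, hp.2⟩
      · rintro ⟨hN, hm, hr⟩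
        exact ⟨⟨hN, mem_Pfin.1 (hMP hm), hr⟩, hm⟩
    · intro j
      rw [Finset.mem_filter, Finset.mem_filter]
      constructor
      · rintro ⟨⟨hN, hp⟩, hm⟩
        exact ⟨hN, hm, hp.2.1, hp.2.2⟩
      · rintro ⟨hN, hm, hne, hr⟩
        exact ⟨⟨hN, mem_Pfin.1 (hMP hm), hne, hr⟩, hm⟩
  · rw [if_neg hP]
    have hnotM : ((i, c) : ℤ × ℤ) ∉ MO n O J := fun h => hP (mem_Pfin.1 (hMP h))
    have hcond : ¬(1 ≤ i ∧ i ≤ (k:ℤ) ∧ c = wOJ n O J i) := by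
      rintro ⟨h1, h2, h3⟩
      obtain ⟨m, _, _, _, _, _, _, _, _, hb1, hb2⟩ :=
        row_setup hA hO hJ hJk h1 h2 (le_trans h2 hkn)
      exact hP ⟨h1, le_trans h2 hkn, by rw [h3]; exact hb1, by rw [h3]; exact hb2⟩
    rw [if_neg hnotM, if_neg hcond]

end
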